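/- Let S be a finite type, let p₀, p₁ : S → ℝ be probability mass functions (p_i(x) ≥ 0 for all x and ∑_x p_i(x) = 1), let A ⊆ S, and let ξ ∈ [0,1]. Set κ = (∑_{x∈S} √(p₀(x)·p₁(x)))². Then ξ·∑_{x∈A} p₀(x) + (1 − ξ)·(1 − ∑_{x∈A} p₁(x)) ≥ (1/2)·(1 − √(1 − 4ξ(1 − ξ)·κ)). -/

import Mathlib

/-- The probability of error of any classical decision rule with region of acceptance `A`
is at least the Helstrom (vector) probability of error, where the squared overlap of the
two state vectors is `κ = (∑ x, √(p₀ x * p₁ x))²`. -/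
theorem classical_error_ge_helstrom {S : Type*} [Fintype S]
    (p₀ p₁ : S → ℝ) (h₀ : ∀ x, 0 ≤ p₀ x) (h₁ : ∀ x, 0 ≤ p₁ x)
    (hs₀ : ∑ x, p₀ x = 1) (hs₁ : ∑ x, p₁ x = 1)
    (A : Finset S) (ξ : ℝ) (hξ : ξ ∈ Set.Icc (0 : ℝ) 1) :
    ξ * (∑ x ∈ A, p₀ x) + (1 - ξ) * (1 - ∑ x ∈ A, p₁ x) ≥
      (1 / 2) * (1 - Real.sqrt (1 - 4 * ξ * (1 - ξ) *
        (∑ x, Real.sqrt (p₀ x * p₁ x)) ^ 2)) := by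
  classical
  obtain ⟨hξ0, hξ1⟩ := hξ
  have hξ1' : (0:ℝ) ≤ 1 - ξ := by linarith
  set a : S → ℝ := fun x => ξ * p₀ x with ha
  set b : S → ℝ := fun x => (1 - ξ) * p₁ x with hb
  have ha0 : ∀ x, 0 ≤ a x := fun x => mul_nonneg hξ0 (h₀ x)
  have hb0 : ∀ x, 0 ≤ b x := fun x => mul_nonneg hξ1' (h₁ x)
  have hsa : ∑ x, a x = ξ := by
    simp only [ha, ← Finset.mul_sum, hs₀, mul_one]
  have hsb : ∑ x, b x = 1 - ξ := by
    simp only [hb, ← Finset.mul_sum, hs₁, mul_one]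
  set c := ∑ x, Real.sqrt (a x * b x) with hc
  have hc2 : c ^ 2 = ξ * (1 - ξ) * (∑ x, Real.sqrt (p₀ x * p₁ x)) ^ 2 := by
    have hceq : c = Real.sqrt (ξ * (1 - ξ)) * ∑ x, Real.sqrt (p₀ x * p₁ x) := by
      rw [hc, Finset.mul_sum]
      refine Finset.sum_congr rfl fun x _ => ?_
      rw [← Real.sqrt_mul (mul_nonneg hξ0 hξ1')]
      simp only [ha, hb]
      ring_nf
    rw [hceq, mul_pow, Real.sq_sqrt (mul_nonneg hξ0 hξ1')]
  set T := ∑ x, |a x - b x| with hT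
  have hT0 : 0 ≤ T := Finset.sum_nonneg fun x _ => abs_nonneg _
  -- Cauchy-Schwarz bound on T
  have hCS : T ^ 2 ≤ 1 - 4 * c ^ 2 := by
    have key : T = ∑ x, |Real.sqrt (a x) - Real.sqrt (b x)| *
        (Real.sqrt (a x) + Real.sqrt (b x)) := by
      refine Finset.sum_congr rfl fun x _ => ?_
      rw [← abs_of_nonneg (add_nonneg (Real.sqrt_nonneg (a x)) (Real.sqrt_nonneg (b x))),
        ← abs_mul]
      congr 1
      have := Real.sq_sqrt (ha0 x)
      have := Real.sq_sqrt (hb0 x)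
      nlinarith [Real.sq_sqrt (ha0 x), Real.sq_sqrt (hb0 x)]
    have cs := Finset.sum_mul_sq_le_sq_mul_sq Finset.univ
      (fun x => |Real.sqrt (a x) - Real.sqrt (b x)|)
      (fun x => Real.sqrt (a x) + Real.sqrt (b x))
    have e1 : ∑ x, |Real.sqrt (a x) - Real.sqrt (b x)| ^ 2 = 1 - 2 * c := by
      have : ∀ x : S, |Real.sqrt (a x) - Real.sqrt (b x)| ^ 2 =
          a x + b x - 2 * Real.sqrt (a x * b x) := by
        intro x
        have hab : Real.sqrt (a x * b x) = Real.sqrt (a x) * Real.sqrt (b x) :=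
          Real.sqrt_mul (ha0 x) _
        rw [sq_abs, sub_sq, Real.sq_sqrt (ha0 x), Real.sq_sqrt (hb0 x), hab]
        ring
      rw [Finset.sum_congr rfl fun x _ => this x]
      rw [Finset.sum_sub_distrib, Finset.sum_add_distrib, hsa, hsb, ← Finset.mul_sum, ← hc]
      ring
    have e2 : ∑ x, (Real.sqrt (a x) + Real.sqrt (b x)) ^ 2 = 1 + 2 * c := by
      have : ∀ x : S, (Real.sqrt (a x) + Real.sqrt (b x)) ^ 2 =
          a x + b x + 2 * Real.sqrt (a x * b x) := by
        intro x
        have hab : Real.sqrt (a x * b x) = Real.sqrt (a x) * Real.sqrt (b x) :=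
          Real.sqrt_mul (ha0 x) _
        rw [add_sq, Real.sq_sqrt (ha0 x), Real.sq_sqrt (hb0 x), hab]
        ring
      rw [Finset.sum_congr rfl fun x _ => this x]
      rw [Finset.sum_add_distrib, Finset.sum_add_distrib, hsa, hsb, ← Finset.mul_sum, ← hc]
      ring
    calc T ^ 2 ≤ (1 - 2 * c) * (1 + 2 * c) := by rw [key]; rw [e1, e2] at cs; exact cs
    _ = 1 - 4 * c ^ 2 := by ring
  have hTle : T ≤ Real.sqrt (1 - 4 * ξ * (1 - ξ) * (∑ x, Real.sqrt (p₀ x * p₁ x)) ^ 2) := by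
    have : 1 - 4 * ξ * (1 - ξ) * (∑ x, Real.sqrt (p₀ x * p₁ x)) ^ 2 = 1 - 4 * c ^ 2 := by
      rw [hc2]; ring
    rw [this]
    nlinarith [Real.sq_sqrt (by nlinarith : (0:ℝ) ≤ 1 - 4 * c ^ 2),
      Real.sqrt_nonneg (1 - 4 * c ^ 2)]
  -- error ≥ sum of mins
  have hmin : ξ * (∑ x ∈ A, p₀ x) + (1 - ξ) * (1 - ∑ x ∈ A, p₁ x) ≥
      ∑ x, min (a x) (b x) := by
    have h1 : ξ * (∑ x ∈ A, p₀ x) = ∑ x ∈ A, a x := by rw [Finset.mul_sum]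
    have h2 : (1 - ξ) * (1 - ∑ x ∈ A, p₁ x) = ∑ x ∈ Aᶜ, b x := by
      have := Finset.sum_add_sum_compl A p₁
      rw [hs₁] at this
      rw [hb]
      simp only [← Finset.mul_sum]
      rw [show (1 : ℝ) - ∑ x ∈ A, p₁ x = ∑ x ∈ Aᶜ, p₁ x by linarith]
    rw [h1, h2, ← Finset.sum_add_sum_compl A (fun x => min (a x) (b x))]
    gcongr with x hx
    · exact min_le_left _ _
    · exact min_le_right _ _
  have hmineq : ∑ x, min (a x) (b x) = (1 - T) / 2 := by
    have : ∀ x : S, min (a x) (b x) = (a x + b x - |a x - b x|) / 2 := by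
      intro x
      rcases le_total (a x) (b x) with h | h
      · rw [min_eq_left h, abs_of_nonpos (by linarith)]; ring
      · rw [min_eq_right h, abs_of_nonneg (by linarith)]; ring
    rw [Finset.sum_congr rfl fun x _ => this x]
    rw [← Finset.sum_div, Finset.sum_sub_distrib, Finset.sum_add_distrib, hsa, hsb, ← hT]
    ring
  rw [hmineq] at hmin
  have : (1 - Real.sqrt (1 - 4 * ξ * (1 - ξ) * (∑ x, Real.sqrt (p₀ x * p₁ x)) ^ 2)) / 2
      ≤ (1 - T) / 2 := by linarith
  linarith
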